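/- The Gagliardo–Nirenberg inequality on the torus: ||f||³_{L⁶(T)} ≤ ||f||_{Ḣ¹(T)} ||f||²_{L²(T)} + (1/(2π)) ||f||³_{L²(T)} holds for all f in H¹(T). -/

import Mathlib

open MeasureTheory intervalIntegral

noncomputable section

/-- The density `|f|² - ‖f‖²_{L²}/(2π)` on the torus, realized on `[0,2π]`. -/
def gaugeDens (f : ℝ → ℂ) (y : ℝ) : ℝ :=
  ‖f y‖ ^ 2 - (∫ t in (0:ℝ)..(2 * Real.pi), ‖f t‖ ^ 2) / (2 * Real.pi)

/-- The zero-average periodic primitive `I[f]`. -/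
def gaugePrim (f : ℝ → ℂ) (x : ℝ) : ℝ :=
  (1 / (2 * Real.pi)) *
    ∫ θ in (0:ℝ)..(2 * Real.pi), ∫ y in θ..x, gaugeDens f y

/-- The gauge map `𝒢_α f = e^{iα I[f]} f`. -/
def gaugeMap (α : ℝ) (f : ℝ → ℂ) : ℝ → ℂ :=
  fun x => Complex.exp (Complex.I * (α : ℂ) * (gaugePrim f x : ℂ)) * f x

/-- `n`-th Fourier coefficient on the torus of length `2π`. -/
def fCoeff (f : ℝ → ℂ) (n : ℤ) : ℂ :=
  (1 / (2 * Real.pi)) * ∫ x in (0:ℝ)..(2 * Real.pi), f x * Complex.exp (-Complex.I * (n : ℂ) * (x : ℂ))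

/-- Fourier projection onto modes `|n| ≤ N`. -/
def fProj (N : ℕ) (f : ℝ → ℂ) : ℝ → ℂ :=
  fun x => ∑ n ∈ Finset.Icc (-(N:ℤ)) (N:ℤ), fCoeff f n * Complex.exp (Complex.I * (n : ℂ) * (x : ℂ))

/-- the Gagliardo–Nirenberg inequality
`‖f‖³_{L⁶} ≤ ‖f‖_{Ḣ¹} ‖f‖²_{L²} + (1/2π) ‖f‖³_{L²}` on the torus. -/
theorem stmt5 (f : ℝ → ℂ) (hf : ContDiff ℝ 1 f) (hper : Function.Periodic f (2 * Real.pi)) :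
    (∫ x in (0:ℝ)..(2 * Real.pi), ‖f x‖ ^ 6) ^ ((1:ℝ)/2)
      ≤ (∫ x in (0:ℝ)..(2 * Real.pi), ‖deriv f x‖ ^ 2) ^ ((1:ℝ)/2)
          * (∫ x in (0:ℝ)..(2 * Real.pi), ‖f x‖ ^ 2)
        + (1 / (2 * Real.pi)) * (∫ x in (0:ℝ)..(2 * Real.pi), ‖f x‖ ^ 2) ^ ((3:ℝ)/2) := by
  have pi_pos : (0:ℝ) < Real.pi := Real.pi_pos
  set TP : ℝ := 2 * Real.pi with hTP
  have tw : (0:ℝ) < TP := by positivity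
  have hfd : Differentiable ℝ f := hf.differentiable one_ne_zero
  have hfc : Continuous f := hfd.continuous
  have hf'c : Continuous (deriv f) := hf.continuous_deriv le_rfl
  set h : ℝ → ℝ := fun t => ‖f t‖ ^ 2 with hh
  set g : ℝ → ℝ := fun t => 2 * ((f t).re * (deriv f t).re + (f t).im * (deriv f t).im) with hg
  have hhc : Continuous h := by
    have : Continuous fun t => ‖f t‖ := hfc.norm
    exact this.pow 2
  have hgc : Continuous g := by
    apply Continuous.mul continuous_const
    exact ((Complex.continuous_re.comp hfc).mul (Complex.continuous_re.comp hf'c)).add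
      ((Complex.continuous_im.comp hfc).mul (Complex.continuous_im.comp hf'c))
  have habsc : Continuous fun t => |g t| := hgc.abs
  -- derivative
  have hderiv : ∀ x, HasDerivAt h (g x) x := by
    intro x
    have hfx : HasDerivAt f (deriv f x) x := (hfd x).hasDerivAt
    have hre : HasDerivAt (fun t => (f t).re) ((deriv f x).re) x :=
      (Complex.reCLM.hasFDerivAt.comp_hasDerivAt x hfx)
    have him : HasDerivAt (fun t => (f t).im) ((deriv f x).im) x :=
      (Complex.imCLM.hasFDerivAt.comp_hasDerivAt x hfx)
    have h2 := (hre.pow 2).add (him.pow 2)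
    have hfun : h = fun t => (f t).re ^ 2 + (f t).im ^ 2 := by
      funext t
      show ‖f t‖ ^ 2 = (f t).re ^ 2 + (f t).im ^ 2
      rw [Complex.sq_norm, Complex.normSq_apply]; ring
    rw [hfun]
    convert h2 using 1
    · rfl
    · rfl
    · rfl
    · simp only [hg]
      push_cast
      ring
  -- FTC
  have hftc : ∀ a b : ℝ, ∫ t in a..b, g t = h b - h a := fun a b =>
    intervalIntegral.integral_eq_sub_of_hasDerivAt (fun t _ => hderiv t)
      (hgc.intervalIntegrable a b)
  have hper' : f TP = f 0 := by simpa using hper 0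
  have hg0 : ∫ t in (0:ℝ)..TP, g t = 0 := by
    rw [hftc 0 TP, hh]; simp [hper']
  set P : ℝ := ∫ t in (0:ℝ)..TP, |g t| with hP
  -- positive/negative part integrals
  have hmax : ∀ a : ℝ, max a 0 = (a + |a|) / 2 := by
    intro a
    rcases le_total a 0 with ha | ha
    · rw [max_eq_right ha, abs_of_nonpos ha]; ring
    · rw [max_eq_left ha, abs_of_nonneg ha]; ring
  have hp_half : (∫ t in (0:ℝ)..TP, max (g t) 0) = (1/2) * P := by
    have : (∫ t in (0:ℝ)..TP, max (g t) 0) = ∫ t in (0:ℝ)..TP, (g t + |g t|) / 2 :=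
      intervalIntegral.integral_congr (fun t _ => hmax (g t))
    rw [this, intervalIntegral.integral_div,
      intervalIntegral.integral_add (hgc.intervalIntegrable _ _) (habsc.intervalIntegrable _ _),
      hg0, ← hP]
    ring
  have hq_half : (∫ t in (0:ℝ)..TP, max (-g t) 0) = (1/2) * P := by
    have h1 : (∫ t in (0:ℝ)..TP, max (-g t) 0) = ∫ t in (0:ℝ)..TP, (-g t + |g t|) / 2 := by
      refine intervalIntegral.integral_congr (fun t _ => ?_)
      rw [hmax (-g t), abs_neg]
    rw [h1, intervalIntegral.integral_div,
      intervalIntegral.integral_add (f := fun t => -g t) ((hgc.neg).intervalIntegrable _ _)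
        (habsc.intervalIntegrable _ _),
      intervalIntegral.integral_neg, hg0, ← hP]
    ring
  -- key pointwise oscillation bound
  have key : ∀ θ ∈ Set.Icc (0:ℝ) TP, ∀ x ∈ Set.Icc (0:ℝ) TP,
      h x - h θ ≤ (1/2) * P := by
    intro θ hθ x hx
    rcases le_total θ x with hle | hle
    · have e1 : h x - h θ = ∫ t in θ..x, g t := (hftc θ x).symm
      rw [e1, ← hp_half]
      calc ∫ t in θ..x, g t ≤ ∫ t in θ..x, max (g t) 0 := by
              refine intervalIntegral.integral_mono hle (hgc.intervalIntegrable _ _)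
                ((hgc.max continuous_const).intervalIntegrable _ _) (fun t => le_max_left _ _)
        _ ≤ ∫ t in (0:ℝ)..TP, max (g t) 0 := by
              refine intervalIntegral.integral_mono_interval hθ.1 hle hx.2
                (ae_of_all _ fun t => le_max_right _ _)
                ((hgc.max continuous_const).intervalIntegrable _ _)
    · have e1 : h x - h θ = ∫ t in x..θ, -g t := by
        rw [intervalIntegral.integral_neg, hftc x θ]; ring
      rw [e1, ← hq_half]
      calc ∫ t in x..θ, -g t ≤ ∫ t in x..θ, max (-g t) 0 := by
              refine intervalIntegral.integral_mono hle ((hgc.neg).intervalIntegrable _ _)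
                (((hgc.neg).max continuous_const).intervalIntegrable _ _)
                (fun t => le_max_left _ _)
        _ ≤ ∫ t in (0:ℝ)..TP, max (-g t) 0 := by
              refine intervalIntegral.integral_mono_interval hx.1 hle hθ.2
                (ae_of_all _ fun t => le_max_right _ _)
                (((hgc.neg).max continuous_const).intervalIntegrable _ _)
  set S : ℝ := ∫ x in (0:ℝ)..TP, ‖f x‖ ^ 2 with hS
  have hSh : S = ∫ x in (0:ℝ)..TP, h x := rfl
  have hS0 : 0 ≤ S := by
    rw [hS]; exact intervalIntegral.integral_nonneg tw.le (fun x _ => by positivity)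
  -- averaging
  have havg : ∀ x ∈ Set.Icc (0:ℝ) TP, h x ≤ S / TP + (1/2) * P := by
    intro x hx
    have h1 : (∫ θ in (0:ℝ)..TP, (h x - h θ)) ≤ ∫ θ in (0:ℝ)..TP, (1/2) * P := by
      refine intervalIntegral.integral_mono_on tw.le ?_ ?_ (fun θ hθ => key θ hθ x hx)
      · exact ((continuous_const.sub hhc).intervalIntegrable _ _)
      · exact intervalIntegrable_const
    rw [intervalIntegral.integral_sub intervalIntegrable_const (hhc.intervalIntegrable _ _),
      intervalIntegral.integral_const, intervalIntegral.integral_const] at h1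
    simp only [smul_eq_mul, sub_zero] at h1
    rw [← hSh] at h1
    have h2 : h x ≤ (S + TP * ((1/2) * P)) / TP := by
      rw [le_div_iff₀ tw]; nlinarith
    calc h x ≤ (S + TP * ((1/2) * P)) / TP := h2
      _ = S / TP + (1/2) * P := by field_simp
  -- |g| ≤ 2 ‖f‖ ‖f'‖
  have habs_le : ∀ t, |g t| ≤ 2 * (‖f t‖ * ‖deriv f t‖) := by
    intro t
    have ha : ‖f t‖ ^ 2 = (f t).re ^ 2 + (f t).im ^ 2 := by
      rw [Complex.sq_norm, Complex.normSq_apply]; ring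
    have hb : ‖deriv f t‖ ^ 2 = (deriv f t).re ^ 2 + (deriv f t).im ^ 2 := by
      rw [Complex.sq_norm, Complex.normSq_apply]; ring
    have ha0 : (0:ℝ) ≤ ‖f t‖ := norm_nonneg _
    have hb0 : (0:ℝ) ≤ ‖deriv f t‖ := norm_nonneg _
    have hab : (0:ℝ) ≤ ‖f t‖ * ‖deriv f t‖ := mul_nonneg ha0 hb0
    set c : ℝ := (f t).re * (deriv f t).re + (f t).im * (deriv f t).im with hc
    have habsq : (‖f t‖ * ‖deriv f t‖) ^ 2
        = ((f t).re ^ 2 + (f t).im ^ 2) * ((deriv f t).re ^ 2 + (deriv f t).im ^ 2) := by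
      rw [mul_pow, ha, hb]
    have hsq : c ^ 2 ≤ (‖f t‖ * ‖deriv f t‖) ^ 2 := by
      rw [habsq, hc]
      nlinarith [sq_nonneg ((f t).re * (deriv f t).im - (f t).im * (deriv f t).re)]
    have hcle : |c| ≤ ‖f t‖ * ‖deriv f t‖ := by
      calc |c| = Real.sqrt (c ^ 2) := (Real.sqrt_sq_eq_abs c).symm
        _ ≤ Real.sqrt ((‖f t‖ * ‖deriv f t‖) ^ 2) := Real.sqrt_le_sqrt hsq
        _ = |‖f t‖ * ‖deriv f t‖| := Real.sqrt_sq_eq_abs _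
        _ = ‖f t‖ * ‖deriv f t‖ := abs_of_nonneg hab
    have hgt : g t = 2 * c := rfl
    rw [hgt, abs_mul, abs_two]
    linarith
  have hPle : (1/2) * P ≤ ∫ t in (0:ℝ)..TP, ‖f t‖ * ‖deriv f t‖ := by
    have h1 : P ≤ ∫ t in (0:ℝ)..TP, 2 * (‖f t‖ * ‖deriv f t‖) := by
      rw [hP]
      refine intervalIntegral.integral_mono tw.le (habsc.intervalIntegrable _ _)
        ((continuous_const.mul (hfc.norm.mul hf'c.norm)).intervalIntegrable _ _)
        (fun t => habs_le t)
    rw [intervalIntegral.integral_const_mul] at h1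
    linarith
  -- Cauchy–Schwarz
  set A : ℝ := (∫ x in (0:ℝ)..TP, ‖deriv f x‖ ^ 2) ^ ((1:ℝ)/2) with hA
  have hA0 : 0 ≤ A := Real.rpow_nonneg
    (intervalIntegral.integral_nonneg tw.le (fun x _ => by positivity)) _
  have hrpow2 : ∀ x : ℝ, x ^ (2:ℝ) = x ^ 2 := by
    intro x
    rw [show (2:ℝ) = ((2:ℕ):ℝ) by norm_num, Real.rpow_natCast]
  have hCS : (∫ t in (0:ℝ)..TP, ‖f t‖ * ‖deriv f t‖) ≤ S ^ ((1:ℝ)/2) * A := by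
    haveI : IsFiniteMeasure (volume.restrict (Set.Ioc (0:ℝ) TP)) :=
      ⟨by rw [Measure.restrict_apply_univ]; exact measure_Ioc_lt_top⟩
    obtain ⟨C1, hC1⟩ := (isCompact_Icc (a := (0:ℝ)) (b := TP)).exists_bound_of_continuousOn
      hfc.norm.continuousOn
    obtain ⟨C2, hC2⟩ := (isCompact_Icc (a := (0:ℝ)) (b := TP)).exists_bound_of_continuousOn
      hf'c.norm.continuousOn
    have hm1 : MemLp (fun t => ‖f t‖) (ENNReal.ofReal 2)
        (volume.restrict (Set.Ioc (0:ℝ) TP)) :=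
      MemLp.of_bound hfc.norm.aestronglyMeasurable C1
        ((ae_restrict_iff' measurableSet_Ioc).2
          (ae_of_all _ fun t ht => hC1 t (Set.Ioc_subset_Icc_self ht)))
    have hm2 : MemLp (fun t => ‖deriv f t‖) (ENNReal.ofReal 2)
        (volume.restrict (Set.Ioc (0:ℝ) TP)) :=
      MemLp.of_bound hf'c.norm.aestronglyMeasurable C2
        ((ae_restrict_iff' measurableSet_Ioc).2
          (ae_of_all _ fun t ht => hC2 t (Set.Ioc_subset_Icc_self ht)))
    have hpq : Real.HolderConjugate 2 2 := ⟨by norm_num, by norm_num, by norm_num⟩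
    have H := MeasureTheory.integral_mul_le_Lp_mul_Lq_of_nonneg
      (μ := volume.restrict (Set.Ioc (0:ℝ) TP)) hpq
      (ae_of_all _ fun t => norm_nonneg (f t))
      (ae_of_all _ fun t => norm_nonneg (deriv f t)) hm1 hm2
    simp_rw [hrpow2] at H
    rw [hS, hA]
    simp only [intervalIntegral.integral_of_le tw.le]
    exact H
  -- the sup bound
  set M : ℝ := S / TP + S ^ ((1:ℝ)/2) * A with hM
  have hM0 : 0 ≤ M := by
    have : 0 ≤ S ^ ((1:ℝ)/2) := Real.rpow_nonneg hS0 _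
    have : 0 ≤ S ^ ((1:ℝ)/2) * A := mul_nonneg this hA0
    have : 0 ≤ S / TP := div_nonneg hS0 tw.le
    rw [hM]; positivity
  have hhM : ∀ x ∈ Set.Icc (0:ℝ) TP, h x ≤ M := by
    intro x hx
    calc h x ≤ S / TP + (1/2) * P := havg x hx
      _ ≤ S / TP + ∫ t in (0:ℝ)..TP, ‖f t‖ * ‖deriv f t‖ := by linarith
      _ ≤ M := by rw [hM]; linarith [hCS]
  -- L6 bound
  have h6 : (∫ x in (0:ℝ)..TP, ‖f x‖ ^ 6) ≤ M ^ 2 * S := by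
    have h1 : (∫ x in (0:ℝ)..TP, ‖f x‖ ^ 6) ≤ ∫ x in (0:ℝ)..TP, M ^ 2 * h x := by
      refine intervalIntegral.integral_mono_on tw.le
        ((hfc.norm.pow 6).intervalIntegrable _ _)
        ((continuous_const.mul hhc).intervalIntegrable _ _) (fun x hx => ?_)
      have hhx : ‖f x‖ ^ 6 = (h x) ^ 3 := by rw [hh]; ring
      have hx0 : 0 ≤ h x := by rw [hh]; positivity
      have hxM := hhM x hx
      rw [hhx]
      nlinarith [sq_nonneg (h x), sq_nonneg M, mul_nonneg hx0 hM0]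
    rw [intervalIntegral.integral_const_mul, ← hSh] at h1
    exact h1
  have h60 : 0 ≤ ∫ x in (0:ℝ)..TP, ‖f x‖ ^ 6 :=
    intervalIntegral.integral_nonneg tw.le (fun x _ => by positivity)
  have h7 : (∫ x in (0:ℝ)..TP, ‖f x‖ ^ 6) ^ ((1:ℝ)/2) ≤ (M ^ 2 * S) ^ ((1:ℝ)/2) :=
    Real.rpow_le_rpow h60 h6 (by norm_num)
  have h8 : (M ^ 2 * S) ^ ((1:ℝ)/2) = M * S ^ ((1:ℝ)/2) := by
    rw [Real.mul_rpow (sq_nonneg M) hS0, ← Real.rpow_natCast M 2, ← Real.rpow_mul hM0]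
    norm_num
  have hhalf : S ^ ((1:ℝ)/2) * S ^ ((1:ℝ)/2) = S := by
    rw [← Real.rpow_add' hS0 (by norm_num)]
    norm_num
  have h32 : S ^ ((3:ℝ)/2) = S * S ^ ((1:ℝ)/2) := by
    rw [show (3:ℝ)/2 = 1 + 1/2 by norm_num, Real.rpow_add' hS0 (by norm_num), Real.rpow_one]
  have hfinal : M * S ^ ((1:ℝ)/2) = A * S + (1 / TP) * S ^ ((3:ℝ)/2) := by
    rw [h32, hM]
    linear_combination A * hhalf
  calc (∫ x in (0:ℝ)..TP, ‖f x‖ ^ 6) ^ ((1:ℝ)/2)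
      ≤ (M ^ 2 * S) ^ ((1:ℝ)/2) := h7
    _ = M * S ^ ((1:ℝ)/2) := h8
    _ = A * S + (1 / TP) * S ^ ((3:ℝ)/2) := hfinal
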